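/- arXiv:2604.11725 — 3 statements merged into one kernel-verified Lean document; each statement's English description precedes it below -/
import Mathlib

section
/- (Schwartz–Zippel) Let P ∈ F[x₁,…,xₙ] be a nonzero polynomial of total degree at most d over a field F, let S be a finite nonempty subset of F, and let r₁,…,rₙ be chosen independently and uniformly at random from S. Then the probability that P(r₁,…,rₙ) = 0 is at most d/|S|. -/
open Matrix

open Finset MvPolynomial in
private lemma schwartz_zippel_count {F : Type*} [Field F] [DecidableEq F] (S : Finset F) :
    ∀ (n : ℕ) (P : MvPolynomial (Fin n) F), P ≠ 0 →
      ((Fintype.piFinset fun _ : Fin n => S).filter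
        fun x => MvPolynomial.eval x P = 0).card * S.card
        ≤ P.totalDegree * S.card ^ n := by
  intro n
  induction n with
  | zero =>
    intro P hP
    have : ((Fintype.piFinset fun _ : Fin 0 => S).filter
        fun x => MvPolynomial.eval x P = 0) = ∅ := by
      rw [Finset.filter_eq_empty_iff]
      intro x _
      rw [eq_C_of_isEmpty P, eval_C]
      intro h
      exact hP (by rw [eq_C_of_isEmpty P, h, map_zero])
    rw [this]
    simp
  | succ n ih =>
    intro P hP
    set Q : Polynomial (MvPolynomial (Fin n) F) := finSuccEquiv F n P with hQdef
    have hQ : Q ≠ 0 := by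
      simp only [hQdef, ne_eq, EmbeddingLike.map_eq_zero_iff]
      exact hP
    set k : ℕ := Q.natDegree with hk
    set Pk : MvPolynomial (Fin n) F := Q.coeff k with hPkdef
    have hPk : Pk ≠ 0 := by
      simpa [hPkdef, hk] using Polynomial.leadingCoeff_ne_zero.mpr hQ
    have hdeg : Pk.totalDegree + k ≤ P.totalDegree :=
      totalDegree_coeff_finSuccEquiv_add_le P k hPk
    set T : Finset (Fin n → F) := Fintype.piFinset fun _ : Fin n => S with hT
    have hTcard : T.card = S.card ^ n := by
      simp [hT, Fintype.card_piFinset]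
    -- step 1: bound the count by a sum over the tail
    have h1 : ((Fintype.piFinset fun _ : Fin (n+1) => S).filter
          fun x => MvPolynomial.eval x P = 0).card
        ≤ ∑ xs ∈ T, (S.filter fun y =>
            MvPolynomial.eval (Fin.cons y xs : Fin (n+1) → F) P = 0).card := by
      rw [← Finset.card_sigma]
      apply Finset.card_le_card_of_injOn (fun x => ⟨Fin.tail x, x 0⟩)
      · intro x hx
        simp only [Finset.mem_coe, Finset.mem_filter, Fintype.mem_piFinset] at hx
        simp only [Finset.mem_coe, Finset.mem_sigma, Finset.mem_filter, Fintype.mem_piFinset, hT]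
        refine ⟨fun i => hx.1 _, hx.1 0, ?_⟩
        rw [Fin.cons_self_tail]
        exact hx.2
      · intro x _ y _ h
        simp only [Sigma.mk.inj_iff, heq_eq_eq] at h
        funext i
        refine Fin.cases ?_ (fun j => ?_) i
        · exact h.2
        · exact congrFun h.1 j
    -- step 2: bound each inner count
    have h2 : ∀ xs ∈ T, MvPolynomial.eval xs Pk ≠ 0 →
        (S.filter fun y =>
          MvPolynomial.eval (Fin.cons y xs : Fin (n+1) → F) P = 0).card ≤ k := by
      intro xs _ hxs
      set q : Polynomial F := Q.map (MvPolynomial.eval xs) with hq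
      have hqne : q ≠ 0 := by
        intro h
        apply hxs
        have := congrArg (fun p => Polynomial.coeff p k) h
        simpa [hq, Polynomial.coeff_map] using this
      have heval : ∀ y : F, MvPolynomial.eval (Fin.cons y xs : Fin (n+1) → F) P
          = q.eval y := fun y => eval_eq_eval_mv_eval' xs y P
      calc (S.filter fun y =>
            MvPolynomial.eval (Fin.cons y xs : Fin (n+1) → F) P = 0).card
          ≤ q.natDegree := by
            apply Polynomial.card_le_degree_of_subset_roots
            intro y hy
            simp only [Finset.mem_val, Finset.mem_filter] at hy
            rw [Polynomial.mem_roots hqne]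
            rw [Polynomial.IsRoot, ← heval]
            exact hy.2
        _ ≤ k := Polynomial.natDegree_map_le
    -- split the sum
    have h3 : ∑ xs ∈ T, (S.filter fun y =>
          MvPolynomial.eval (Fin.cons y xs : Fin (n+1) → F) P = 0).card
        ≤ (T.filter fun xs => MvPolynomial.eval xs Pk = 0).card * S.card
          + S.card ^ n * k := by
      rw [← Finset.sum_filter_add_sum_filter_not T (fun xs => MvPolynomial.eval xs Pk = 0)]
      gcongr with xs hxs xs hxs
      · calc ∑ xs ∈ T.filter fun xs => MvPolynomial.eval xs Pk = 0,
              (S.filter fun y =>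
                MvPolynomial.eval (Fin.cons y xs : Fin (n+1) → F) P = 0).card
            ≤ ∑ _xs ∈ T.filter fun xs => MvPolynomial.eval xs Pk = 0, S.card :=
              Finset.sum_le_sum fun xs _ => Finset.card_filter_le _ _
          _ = _ := by rw [Finset.sum_const, smul_eq_mul]
      · calc ∑ xs ∈ T.filter fun xs => ¬ MvPolynomial.eval xs Pk = 0,
              (S.filter fun y =>
                MvPolynomial.eval (Fin.cons y xs : Fin (n+1) → F) P = 0).card
            ≤ ∑ _xs ∈ T.filter fun xs => ¬ MvPolynomial.eval xs Pk = 0, k :=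
              Finset.sum_le_sum fun xs hxs => by
                rw [Finset.mem_filter] at hxs
                exact h2 xs hxs.1 hxs.2
          _ ≤ T.card * k := by
              rw [Finset.sum_const, smul_eq_mul]
              exact Nat.mul_le_mul_right _ (Finset.card_filter_le _ _)
          _ = S.card ^ n * k := by rw [hTcard]
    have ihPk := ih Pk hPk
    calc ((Fintype.piFinset fun _ : Fin (n+1) => S).filter
            fun x => MvPolynomial.eval x P = 0).card * S.card
        ≤ ((T.filter fun xs => MvPolynomial.eval xs Pk = 0).card * S.card
            + S.card ^ n * k) * S.card := by
          exact Nat.mul_le_mul_right _ (h1.trans h3)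
      _ = (T.filter fun xs => MvPolynomial.eval xs Pk = 0).card * S.card * S.card
            + k * S.card ^ (n+1) := by ring
      _ ≤ Pk.totalDegree * S.card ^ n * S.card + k * S.card ^ (n+1) := by
          gcongr
      _ = (Pk.totalDegree + k) * S.card ^ (n+1) := by ring
      _ ≤ P.totalDegree * S.card ^ (n+1) := Nat.mul_le_mul_right _ hdeg

/-- **Schwartz–Zippel lemma.** If `P` is a nonzero polynomial in `n` variables over a
field `F` of total degree at most `d`, and `r₁,…,rₙ` are chosen independently and
uniformly at random from a finite nonempty subset `S ⊆ F`, then the probability that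
`P(r₁,…,rₙ) = 0` is at most `d / |S|`. -/
theorem schwartz_zippel {F : Type*} [Field F] [DecidableEq F] {n : ℕ}
    (P : MvPolynomial (Fin n) F) (hP : P ≠ 0) (d : ℕ) (hd : P.totalDegree ≤ d)
    (S : Finset F) (hS : S.Nonempty) :
    (((Fintype.piFinset fun _ : Fin n => S).filter
        fun x => MvPolynomial.eval x P = 0).card : ℝ) / ((S.card : ℝ) ^ n)
      ≤ (d : ℝ) / (S.card : ℝ) := by
  have hSc : (0 : ℝ) < (S.card : ℝ) := by
    exact_mod_cast Finset.card_pos.mpr hS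
  rw [div_le_div_iff₀ (by positivity) hSc]
  have key : ((Fintype.piFinset fun _ : Fin n => S).filter
      fun x => MvPolynomial.eval x P = 0).card * S.card ≤ d * S.card ^ n :=
    (schwartz_zippel_count S n P hP).trans (Nat.mul_le_mul_right _ hd)
  exact_mod_cast key
end

section
/- Let F be a field, M an r × ℓ matrix of rank ℓ over F, and let w₁,…,w_r be chosen independently and uniformly at random from a finite subset S ⊆ F. Let B = diag(w₁,…,w_r). Then Pr[rank(MᵀBM) < ℓ] ≤ ℓ/|S|. -/
open Matrix MvPolynomial Finset

open Classical in
theorem sz_aux {F : Type*} [Field F] :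
    ∀ (n : ℕ) (p : MvPolynomial (Fin n) F), p ≠ 0 → ∀ S : Finset F,
    ((Fintype.piFinset fun _ : Fin n => S).filter fun x => eval x p = 0).card * S.card
      ≤ p.totalDegree * S.card ^ n := by
  intro n
  induction n with
  | zero =>
    intro p hp S
    have he : ((Fintype.piFinset fun _ : Fin 0 => S).filter fun x => eval x p = 0) = ∅ := by
      rw [Finset.eq_empty_iff_forall_notMem]
      intro x hx
      rw [Finset.mem_filter] at hx
      have hpc : p = C (p.coeff 0) := p.eq_C_of_isEmpty
      rw [hpc, eval_C] at hx
      exact hp (by rw [hpc, hx.2, map_zero])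
    rw [he]
    simp
  | succ n ih =>
    intro p hp S
    set q := finSuccEquiv F n p with hq
    have hq0 : q ≠ 0 := by
      intro h
      apply hp
      have := congrArg (finSuccEquiv F n).symm h
      rwa [hq, AlgEquiv.symm_apply_apply, map_zero] at this
    set k := q.natDegree with hk
    have hlc : q.coeff k ≠ 0 := by
      exact Polynomial.leadingCoeff_ne_zero.mpr hq0
    have hdeg : (q.coeff k).totalDegree + k ≤ p.totalDegree :=
      totalDegree_coeff_finSuccEquiv_add_le p k hlc
    set T := Fintype.piFinset fun _ : Fin n => S with hT
    set A := (Fintype.piFinset fun _ : Fin (n + 1) => S).filter fun x => eval x p = 0 with hA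
    have hTcard : T.card = S.card ^ n := by
      simp [hT, Fintype.card_piFinset]
    -- fiberwise count
    have hfib : A.card = ∑ z ∈ T, (A.filter fun x => Fin.tail x = z).card := by
      apply Finset.card_eq_sum_card_fiberwise
      intro x hx
      rw [hA, Finset.mem_coe, Finset.mem_filter, Fintype.mem_piFinset] at hx
      rw [hT, Finset.mem_coe, Fintype.mem_piFinset]
      exact fun i => hx.1 _
    have hfiber_le : ∀ z ∈ T, (A.filter fun x => Fin.tail x = z).card
        ≤ (S.filter fun y => eval (Fin.cons y z) p = 0).card := by
      intro z _
      apply Finset.card_le_card_of_injOn (fun x => x 0)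
      · intro x hx
        rw [Finset.mem_coe, Finset.mem_filter] at hx ⊢
        obtain ⟨hx1, hx2⟩ := hx
        rw [hA, Finset.mem_filter, Fintype.mem_piFinset] at hx1
        refine ⟨hx1.1 0, ?_⟩
        rw [← hx2, Fin.cons_self_tail]
        exact hx1.2
      · intro x hx y hy hxy
        simp only [Finset.mem_coe, Finset.mem_filter] at hx hy
        have : x = Fin.cons (x 0) z := by rw [← hx.2, Fin.cons_self_tail]
        have hy' : y = Fin.cons (y 0) z := by rw [← hy.2, Fin.cons_self_tail]
        rw [this, hy', show x 0 = y 0 from hxy]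
    have hroot : ∀ z ∈ T, eval z (q.coeff k) ≠ 0 →
        (S.filter fun y => eval (Fin.cons y z) p = 0).card ≤ k := by
      intro z _ hz
      set q' := q.map (eval z) with hq'
      have hq'0 : q' ≠ 0 := fun h => hz (by
        have := Polynomial.coeff_map (eval z) k (p := q)
        rw [hq'] at h
        rw [h] at this
        simpa using this.symm)
      have hsub : (S.filter fun y => eval (Fin.cons y z) p = 0) ⊆ q'.roots.toFinset := by
        intro y hy
        rw [Finset.mem_filter] at hy
        rw [Multiset.mem_toFinset, Polynomial.mem_roots hq'0]
        have := eval_eq_eval_mv_eval' z y p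
        rw [hy.2] at this
        exact this.symm
      calc (S.filter fun y => eval (Fin.cons y z) p = 0).card
          ≤ q'.roots.toFinset.card := Finset.card_le_card hsub
        _ ≤ Multiset.card q'.roots := q'.roots.toFinset_card_le
        _ ≤ q'.natDegree := q'.card_roots'
        _ ≤ k := Polynomial.natDegree_map_le
    -- split T
    have key : A.card ≤ (T.filter fun z => eval z (q.coeff k) = 0).card * S.card
        + S.card ^ n * k := by
      rw [hfib]
      calc ∑ z ∈ T, (A.filter fun x => Fin.tail x = z).card
          ≤ ∑ z ∈ T, (S.filter fun y => eval (Fin.cons y z) p = 0).card :=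
            Finset.sum_le_sum hfiber_le
        _ = ∑ z ∈ T.filter (fun z => eval z (q.coeff k) = 0),
              (S.filter fun y => eval (Fin.cons y z) p = 0).card
            + ∑ z ∈ T.filter (fun z => ¬ eval z (q.coeff k) = 0),
              (S.filter fun y => eval (Fin.cons y z) p = 0).card :=
            (Finset.sum_filter_add_sum_filter_not T _ _).symm
        _ ≤ ∑ _z ∈ T.filter (fun z => eval z (q.coeff k) = 0), S.card
            + ∑ _z ∈ T.filter (fun z => ¬ eval z (q.coeff k) = 0), k := by
            gcongr with z hz z hz
            · exact Finset.filter_subset _ _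
            · rw [Finset.mem_filter] at hz
              exact hroot z hz.1 hz.2
        _ ≤ (T.filter fun z => eval z (q.coeff k) = 0).card * S.card + S.card ^ n * k := by
            rw [Finset.sum_const, Finset.sum_const, smul_eq_mul, smul_eq_mul]
            gcongr
            calc (T.filter fun z => ¬ eval z (q.coeff k) = 0).card ≤ T.card :=
                  Finset.card_le_card (Finset.filter_subset _ _)
              _ = S.card ^ n := hTcard
    -- combine with IH
    have ihlc := ih (q.coeff k) hlc S
    calc A.card * S.card
        ≤ ((T.filter fun z => eval z (q.coeff k) = 0).card * S.card + S.card ^ n * k) * S.card :=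
          Nat.mul_le_mul_right _ key
      _ = ((T.filter fun z => eval z (q.coeff k) = 0).card * S.card) * S.card
          + k * S.card ^ (n + 1) := by ring
      _ ≤ ((q.coeff k).totalDegree * S.card ^ n) * S.card + k * S.card ^ (n + 1) := by
          gcongr
      _ = ((q.coeff k).totalDegree + k) * S.card ^ (n + 1) := by ring
      _ ≤ p.totalDegree * S.card ^ (n + 1) := Nat.mul_le_mul_right _ hdeg

open Classical in
/-- If `M` is an `r × ℓ` matrix of rank `ℓ` over a field `F` and `w₁,…,w_r` are chosen
independently and uniformly at random from a finite nonempty subset `S ⊆ F`, then for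
`B = diag(w₁,…,w_r)` we have `Pr[rank(MᵀBM) < ℓ] ≤ ℓ / |S|`. -/
theorem prob_rank_lt_le {F : Type*} [Field F] {r ℓ : ℕ}
    (M : Matrix (Fin r) (Fin ℓ) F) (hrank : M.rank = ℓ)
    (S : Finset F) (hS : S.Nonempty) :
    (((Fintype.piFinset fun _ : Fin r => S).filter
        fun w => (Mᵀ * Matrix.diagonal w * M).rank < ℓ).card : ℝ) / ((S.card : ℝ) ^ r)
      ≤ (ℓ : ℝ) / (S.card : ℝ) := by
  set P : MvPolynomial (Fin r) F := ((M.map (C : F →+* MvPolynomial (Fin r) F))ᵀ * diagonal (X : Fin r → MvPolynomial (Fin r) F) * M.map (C : F →+* MvPolynomial (Fin r) F)).det with hP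
  -- evaluation of P
  have heval : ∀ w : Fin r → F, eval w P = (Mᵀ * diagonal w * M).det := by
    intro w
    rw [hP, RingHom.map_det]
    congr 1
    have h1 : (M.map C).map (eval w) = M := by
      ext i j; simp
    rw [RingHom.mapMatrix_apply, Matrix.map_mul, Matrix.map_mul, Matrix.transpose_map, h1,
      Matrix.diagonal_map (map_zero _)]
    congr 1
    ext i
    simp
  -- degree bound
  have hentry : ∀ a b, (((M.map (C : F →+* MvPolynomial (Fin r) F))ᵀ * diagonal (X : Fin r → MvPolynomial (Fin r) F) * M.map (C : F →+* MvPolynomial (Fin r) F) : Matrix (Fin ℓ) (Fin ℓ) _) a b)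
      = ∑ i, C (M i a) * X i * C (M i b) := by
    intro a b
    simp [Matrix.mul_apply, Matrix.diagonal_apply, Matrix.map_apply, Matrix.transpose_apply,
      mul_ite, ite_mul, mul_zero, zero_mul]
  have hdegP : P.totalDegree ≤ ℓ := by
    rw [hP, Matrix.det_apply]
    refine (totalDegree_finset_sum _ _).trans (Finset.sup_le fun σ _ => ?_)
    refine (totalDegree_smul_le _ _).trans ?_
    refine (totalDegree_finset_prod _ _).trans ?_
    have : ∀ i : Fin ℓ, (((M.map (C : F →+* MvPolynomial (Fin r) F))ᵀ * diagonal (X : Fin r → MvPolynomial (Fin r) F) * M.map (C : F →+* MvPolynomial (Fin r) F) : Matrix (Fin ℓ) (Fin ℓ) _)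
        (σ i) i).totalDegree ≤ 1 := by
      intro i
      rw [hentry]
      refine (totalDegree_finset_sum _ _).trans (Finset.sup_le fun j _ => ?_)
      refine (totalDegree_mul _ _).trans ?_
      rw [totalDegree_C, add_zero]
      refine (totalDegree_mul _ _).trans ?_
      simp [totalDegree_C, totalDegree_X]
    refine le_trans (Finset.sum_le_sum fun i (_ : i ∈ Finset.univ) => this i) ?_
    simp
  -- an invertible row submatrix
  have h1 : Module.finrank F (Submodule.span F (Set.range M)) = ℓ := by
    exact (Matrix.rank_eq_finrank_span_row M).symm.trans hrank
  have htop : Submodule.span F (Set.range M) = ⊤ := by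
    apply Submodule.eq_top_of_finrank_eq
    rw [h1, Module.finrank_fintype_fun_eq_card, Fintype.card_fin]
  obtain ⟨t, hts, hsp, hli⟩ := exists_linearIndependent F (Set.range M)
  have hfin : t.Finite := hli.setFinite
  haveI : Fintype t := hfin.fintype
  let b : Module.Basis t F (Fin ℓ → F) := Module.Basis.mk hli (by rw [Subtype.range_coe, hsp, htop])
  have hcard : Fintype.card t = ℓ := by
    have := Module.finrank_eq_card_basis b
    rw [Module.finrank_fintype_fun_eq_card, Fintype.card_fin] at this
    omega
  let e : Fin ℓ ≃ t := (Fintype.equivFinOfCardEq hcard).symm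
  have hsub : ∀ c : Fin ℓ, ∃ i, M i = (e c : Fin ℓ → F) := fun c => hts (e c).2
  choose g hg using hsub
  have hginj : Function.Injective g := by
    intro c1 c2 h
    have : (e c1 : Fin ℓ → F) = (e c2 : Fin ℓ → F) := by rw [← hg, ← hg, h]
    exact e.injective (Subtype.val_injective this)
  have hrows : LinearIndependent F (fun c : Fin ℓ => M (g c)) := by
    have heq : (fun c : Fin ℓ => M (g c)) = (fun x : t => (x : Fin ℓ → F)) ∘ e := by
      funext c; exact hg c
    rw [heq]
    exact hli.comp e e.injective
  have hM'unit : IsUnit (M.submatrix g id) := by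
    rw [← Matrix.linearIndependent_rows_iff_isUnit]
    exact hrows
  have hdet' : (M.submatrix g id).det ≠ 0 :=
    ((Matrix.isUnit_iff_isUnit_det _).mp hM'unit).ne_zero
  -- nonvanishing of P
  have hP0 : P ≠ 0 := by
    intro h0
    set d : Fin r → MvPolynomial (Fin ℓ) F := Function.extend g X 0 with hd
    set φ : MvPolynomial (Fin r) F →+* MvPolynomial (Fin ℓ) F := eval₂Hom C d with hφ
    have hφ0 : φ P = 0 := by rw [h0, map_zero]
    have hφC : ∀ a : F, φ (C a) = C a := fun a => by simp [hφ]
    have hφX : ∀ i, φ (X i) = d i := fun i => by simp [hφ]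
    have hmat : φ P = (((M.submatrix g id).map (C : F →+* MvPolynomial (Fin ℓ) F))ᵀ * diagonal (X : Fin ℓ → MvPolynomial (Fin ℓ) F) *
        (M.submatrix g id).map (C : F →+* MvPolynomial (Fin ℓ) F)).det := by
      rw [hP, RingHom.map_det, RingHom.mapMatrix_apply]
      congr 1
      refine Matrix.ext fun a c => ?_
      rw [Matrix.map_apply, hentry]
      have hRHS : ((((M.submatrix g id).map (C : F →+* MvPolynomial (Fin ℓ) F))ᵀ * diagonal (X : Fin ℓ → MvPolynomial (Fin ℓ) F) * (M.submatrix g id).map (C : F →+* MvPolynomial (Fin ℓ) F) :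
            Matrix (Fin ℓ) (Fin ℓ) (MvPolynomial (Fin ℓ) F))) a c
          = ∑ b' : Fin ℓ, C (M (g b') a) * X b' * C (M (g b') c) := by
        simp [Matrix.mul_apply, Matrix.diagonal_apply, Matrix.map_apply, Matrix.transpose_apply,
          Matrix.submatrix_apply, mul_ite, ite_mul, mul_zero, zero_mul]
      rw [hRHS, map_sum]
      have hterm : ∀ i : Fin r, φ (C (M i a) * X i * C (M i c))
          = C (M i a) * d i * C (M i c) := by
        intro i
        rw [_root_.map_mul, _root_.map_mul, hφC, hφX, hφC]
      simp_rw [hterm]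
      calc ∑ i : Fin r, C (M i a) * d i * C (M i c)
          = ∑ i ∈ Finset.univ.image g, C (M i a) * d i * C (M i c) := by
            refine (Finset.sum_subset (Finset.subset_univ _) fun i _ hi => ?_).symm
            have : d i = 0 := by
              rw [hd]
              refine Function.extend_apply' _ _ _ ?_
              rintro ⟨c', rfl⟩
              exact hi (Finset.mem_image_of_mem g (Finset.mem_univ c'))
            rw [this, mul_zero, zero_mul]
        _ = ∑ b' : Fin ℓ, C (M (g b') a) * d (g b') * C (M (g b') c) :=
            Finset.sum_image fun x _ y _ h => hginj h
        _ = ∑ b' : Fin ℓ, C (M (g b') a) * X b' * C (M (g b') c) := by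
            refine Finset.sum_congr rfl fun b' _ => ?_
            rw [hd, hginj.extend_apply]
    have hCdet : ((M.submatrix g id).map C).det
        = (C ((M.submatrix g id).det) : MvPolynomial (Fin ℓ) F) := by
      rw [← RingHom.mapMatrix_apply, ← RingHom.map_det]
    rw [hmat, Matrix.det_mul, Matrix.det_mul, Matrix.det_transpose, Matrix.det_diagonal,
      hCdet] at hφ0
    have : (C ((M.submatrix g id).det) : MvPolynomial (Fin ℓ) F) ≠ 0 := fun h =>
      hdet' (by simpa using h)
    have hprod : (∏ i : Fin ℓ, (X i : MvPolynomial (Fin ℓ) F)) ≠ 0 :=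
      Finset.prod_ne_zero_iff.mpr fun i _ => MvPolynomial.X_ne_zero i
    exact (mul_ne_zero (mul_ne_zero this hprod) this) hφ0
  -- count
  have hnat : ((Fintype.piFinset fun _ : Fin r => S).filter
      fun w => (Mᵀ * Matrix.diagonal w * M).rank < ℓ).card * S.card ≤ ℓ * S.card ^ r := by
    have hsubset : ((Fintype.piFinset fun _ : Fin r => S).filter
        fun w => (Mᵀ * Matrix.diagonal w * M).rank < ℓ)
        ⊆ ((Fintype.piFinset fun _ : Fin r => S).filter fun w => eval w P = 0) := by
      intro w hw
      rw [Finset.mem_filter] at hw ⊢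
      refine ⟨hw.1, ?_⟩
      by_contra h
      rw [heval w] at h
      have hunit : IsUnit (Mᵀ * diagonal w * M) :=
        (Matrix.isUnit_iff_isUnit_det _).mpr (isUnit_iff_ne_zero.mpr h)
      have := Matrix.rank_of_isUnit _ hunit
      rw [Fintype.card_fin] at this
      omega
    calc ((Fintype.piFinset fun _ : Fin r => S).filter
          fun w => (Mᵀ * Matrix.diagonal w * M).rank < ℓ).card * S.card
        ≤ ((Fintype.piFinset fun _ : Fin r => S).filter
          fun w => eval w P = 0).card * S.card :=
          Nat.mul_le_mul_right _ (Finset.card_le_card hsubset)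
      _ ≤ P.totalDegree * S.card ^ r := sz_aux r P hP0 S
      _ ≤ ℓ * S.card ^ r := Nat.mul_le_mul_right _ hdegP
  have hS0 : (0 : ℝ) < S.card := by exact_mod_cast hS.card_pos
  rw [div_le_div_iff₀ (by positivity) hS0]
  exact_mod_cast hnat
end

section
/- (Edmonds' matroid intersection theorem) Let M₁ = (V, I₁) and M₂ = (V, I₂) be matroids on a finite ground set V with rank functions rank₁ and rank₂. Then max{|I| : I ∈ I₁ ∩ I₂} = min{rank₁(S) + rank₂(T) : S, T ⊆ V, S ∪ T = V}. -/
open Classical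

variable {V : Type*} [DecidableEq V] [Fintype V]

/-- A matroid on a finite ground set `V`, given by its family of independent sets:
a nonempty, downward closed family satisfying the augmentation property. -/
structure FinMatroid (V : Type*) [DecidableEq V] [Fintype V] where
  Indep : Finset V → Prop
  exists_indep : ∃ I, Indep I
  indep_subset : ∀ ⦃I J : Finset V⦄, Indep I → J ⊆ I → Indep J
  indep_aug : ∀ ⦃I J : Finset V⦄, Indep I → Indep J → J.card < I.card →
    ∃ v ∈ I \ J, Indep (insert v J)

/-- The rank of a set `S`: the maximum size of an independent subset of `S`. -/
noncomputable def FinMatroid.rank (M : FinMatroid V) (S : Finset V) : ℕ :=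
  (S.powerset.filter M.Indep).sup Finset.card

/-- The span of a set `S`: all elements `v` with `rank (S ∪ {v}) = rank S`. -/
noncomputable def FinMatroid.spanSet (M : FinMatroid V) (S : Finset V) : Finset V :=
  Finset.univ.filter fun v => M.rank (insert v S) = M.rank S

namespace FinMatroid

variable (M : FinMatroid V)

lemma indep_empty : M.Indep ∅ := by
  obtain ⟨I, hI⟩ := M.exists_indep
  exact M.indep_subset hI (Finset.empty_subset I)

lemma card_le_rank {I S : Finset V} (hIS : I ⊆ S) (hI : M.Indep I) :
    I.card ≤ M.rank S :=
  Finset.le_sup (by simp [Finset.mem_filter, Finset.mem_powerset, hIS, hI])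

lemma exists_basis (S : Finset V) : ∃ I, I ⊆ S ∧ M.Indep I ∧ I.card = M.rank S := by
  have hne : (S.powerset.filter M.Indep).Nonempty :=
    ⟨∅, by simp [M.indep_empty]⟩
  obtain ⟨I, hI, hc⟩ := Finset.exists_mem_eq_sup _ hne Finset.card
  simp only [Finset.mem_filter, Finset.mem_powerset] at hI
  exact ⟨I, hI.1, hI.2, hc.symm⟩

lemma rank_mono {S T : Finset V} (h : S ⊆ T) : M.rank S ≤ M.rank T := by
  obtain ⟨I, hIS, hI, hc⟩ := M.exists_basis S
  exact hc ▸ M.card_le_rank (hIS.trans h) hI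

lemma rank_empty : M.rank ∅ = 0 := by
  obtain ⟨I, hIS, hI, hc⟩ := M.exists_basis ∅
  rw [← hc, Finset.subset_empty.1 hIS, Finset.card_empty]

lemma exists_basis_superset {I S : Finset V} (hIS : I ⊆ S) (hI : M.Indep I) :
    ∃ B, I ⊆ B ∧ B ⊆ S ∧ M.Indep B ∧ B.card = M.rank S := by
  obtain ⟨n, hn⟩ : ∃ n, n = M.rank S - I.card := ⟨_, rfl⟩
  induction n generalizing I with
  | zero =>
    have := M.card_le_rank hIS hI
    exact ⟨I, subset_refl _, hIS, hI, by omega⟩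
  | succ n ih =>
    have hlt : I.card < M.rank S := by omega
    obtain ⟨B0, hBS, hB, hcard⟩ := M.exists_basis S
    obtain ⟨v, hv, hvI⟩ := M.indep_aug hB hI (by omega)
    rw [Finset.mem_sdiff] at hv
    obtain ⟨B, hIB, hBS', hB', hc'⟩ :=
      ih (Finset.insert_subset (hBS hv.1) hIS) hvI
        (by rw [Finset.card_insert_of_notMem hv.2]; omega)
    exact ⟨B, (Finset.subset_insert _ _).trans hIB, hBS', hB', hc'⟩

lemma rank_insert_le (v : V) (S : Finset V) :
    M.rank (insert v S) ≤ M.rank S + 1 := by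
  obtain ⟨B, hBS, hB, hc⟩ := M.exists_basis (insert v S)
  have hsub : B.erase v ⊆ S := by
    intro x hx
    rw [Finset.mem_erase] at hx
    rcases Finset.mem_insert.1 (hBS hx.2) with h | h
    · exact absurd h hx.1
    · exact h
  have h2 : (B.erase v).card ≤ M.rank S :=
    M.card_le_rank hsub (M.indep_subset hB (Finset.erase_subset _ _))
  by_cases hvB : v ∈ B
  · have := Finset.card_erase_of_mem hvB
    omega
  · rw [Finset.erase_eq_of_notMem hvB] at h2
    omega

lemma rank_submod (A B : Finset V) :
    M.rank (A ∪ B) + M.rank (A ∩ B) ≤ M.rank A + M.rank B := by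
  obtain ⟨I, hIAB, hI, hIc⟩ := M.exists_basis (A ∩ B)
  obtain ⟨J, hIJ, hJAB, hJ, hJc⟩ :=
    M.exists_basis_superset (hIAB.trans (Finset.inter_subset_left.trans Finset.subset_union_left)) hI
  have hJA : (J ∩ A).card ≤ M.rank A :=
    M.card_le_rank Finset.inter_subset_right (M.indep_subset hJ Finset.inter_subset_left)
  have hJB : (J ∩ B).card ≤ M.rank B :=
    M.card_le_rank Finset.inter_subset_right (M.indep_subset hJ Finset.inter_subset_left)
  have hun : (J ∩ A) ∪ (J ∩ B) = J := by
    rw [← Finset.inter_union_distrib_left]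
    exact Finset.inter_eq_left.2 hJAB
  have hin : (J ∩ A) ∩ (J ∩ B) = J ∩ (A ∩ B) := by
    ext x; simp [Finset.mem_inter]; tauto
  have hIJAB : I ⊆ J ∩ (A ∩ B) := Finset.subset_inter hIJ hIAB
  have hcard := Finset.card_union_add_card_inter (J ∩ A) (J ∩ B)
  rw [hun, hin] at hcard
  have := Finset.card_le_card hIJAB
  omega

lemma rank_insert_of_dep {v : V} (h : ¬ M.Indep {v}) (S : Finset V) :
    M.rank (insert v S) = M.rank S := by
  refine le_antisymm ?_ (M.rank_mono (Finset.subset_insert _ _))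
  obtain ⟨B, hBS, hB, hc⟩ := M.exists_basis (insert v S)
  have hvB : v ∉ B := fun hvB =>
    h (M.indep_subset hB (Finset.singleton_subset_iff.2 hvB))
  have : B ⊆ S := by
    intro x hx
    rcases Finset.mem_insert.1 (hBS hx) with rfl | h'
    · exact absurd hx hvB
    · exact h'
  exact hc ▸ M.card_le_rank this hB

/-- Contraction of a matroid by a single independent element. -/
def contract (M : FinMatroid V) (v : V) (hv : M.Indep {v}) : FinMatroid V where
  Indep I := v ∉ I ∧ M.Indep (insert v I)
  exists_indep := ⟨∅, by simpa using hv⟩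
  indep_subset := by
    rintro I J ⟨hvI, hI⟩ hJI
    exact ⟨fun h => hvI (hJI h), M.indep_subset hI (Finset.insert_subset_insert _ hJI)⟩
  indep_aug := by
    rintro I J ⟨hvI, hI⟩ ⟨hvJ, hJ⟩ hcard
    obtain ⟨w, hw, hwJ⟩ := M.indep_aug hI hJ
      (by rw [Finset.card_insert_of_notMem hvI, Finset.card_insert_of_notMem hvJ]; omega)
    rw [Finset.mem_sdiff, Finset.mem_insert] at hw
    have hwv : w ≠ v := fun h => hw.2 (h ▸ Finset.mem_insert_self v J)
    have hwI : w ∈ I := hw.1.resolve_left hwv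
    have hwJ' : w ∉ J := fun h => hw.2 (Finset.mem_insert_of_mem h)
    refine ⟨w, Finset.mem_sdiff.2 ⟨hwI, hwJ'⟩, ?_, ?_⟩
    · rw [Finset.mem_insert]; push_neg; exact ⟨fun h => hwv h.symm, hvJ⟩
    · rwa [Finset.insert_comm]
  
lemma contract_rank (M : FinMatroid V) {v : V} (hv : M.Indep {v}) (X : Finset V)
    (hvX : v ∉ X) : (M.contract v hv).rank X + 1 = M.rank (insert v X) := by
  refine le_antisymm ?_ ?_
  · obtain ⟨I, hIX, ⟨hvI, hI⟩, hc⟩ := (M.contract v hv).exists_basis X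
    have : (insert v I).card ≤ M.rank (insert v X) :=
      M.card_le_rank (Finset.insert_subset_insert _ hIX) hI
    rw [Finset.card_insert_of_notMem hvI] at this
    omega
  · obtain ⟨B, hvB, hBS, hB, hc⟩ :=
      M.exists_basis_superset (Finset.singleton_subset_iff.2 (Finset.mem_insert_self v X)) hv
    have hvB' : v ∈ B := hvB (Finset.mem_singleton_self v)
    have hsub : B.erase v ⊆ X := by
      rw [← Finset.erase_insert hvX]
      exact Finset.erase_subset_erase _ hBS
    have hind : (M.contract v hv).Indep (B.erase v) :=
      ⟨Finset.notMem_erase _ _, by rwa [Finset.insert_erase hvB']⟩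
    have := (M.contract v hv).card_le_rank hsub hind
    rw [Finset.card_erase_of_mem hvB'] at this
    omega

end FinMatroid

namespace FinMatroid

/-- The maximum size of a common independent subset of `E`. -/
noncomputable def maxCommon (M₁ M₂ : FinMatroid V) (E : Finset V) : ℕ :=
  (E.powerset.filter fun I => M₁.Indep I ∧ M₂.Indep I).sup Finset.card

lemma card_le_maxCommon {M₁ M₂ : FinMatroid V} {I E : Finset V} (hIE : I ⊆ E)
    (h1 : M₁.Indep I) (h2 : M₂.Indep I) : I.card ≤ maxCommon M₁ M₂ E :=
  Finset.le_sup (by simp [Finset.mem_filter, Finset.mem_powerset, hIE, h1, h2])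

lemma maxCommon_mono (M₁ M₂ : FinMatroid V) {E E' : Finset V} (h : E' ⊆ E) :
    maxCommon M₁ M₂ E' ≤ maxCommon M₁ M₂ E :=
  Finset.sup_mono (Finset.filter_subset_filter _ (Finset.powerset_mono.2 h))

lemma key (E : Finset V) : ∀ (M₁ M₂ : FinMatroid V),
    ∃ S T : Finset V, S ∪ T = E ∧
      M₁.rank S + M₂.rank T ≤ maxCommon M₁ M₂ E := by
  induction E using Finset.strongInduction with
  | _ E ih =>
    intro M₁ M₂
    rcases E.eq_empty_or_nonempty with rfl | ⟨v, hvE⟩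
    · exact ⟨∅, ∅, by simp, by simp [M₁.rank_empty, M₂.rank_empty]⟩
    set E' := E.erase v with hE'
    have hE'ss : E' ⊂ E := Finset.erase_ssubset hvE
    obtain ⟨S, T, hST, hrank⟩ := ih E' hE'ss M₁ M₂
    have hSE' : S ⊆ E' := hST ▸ Finset.subset_union_left
    have hTE' : T ⊆ E' := hST ▸ Finset.subset_union_right
    have hvS : v ∉ S := fun h => (Finset.notMem_erase v E) (hSE' h)
    have hvT : v ∉ T := fun h => (Finset.notMem_erase v E) (hTE' h)
    have hkk : maxCommon M₁ M₂ E' ≤ maxCommon M₁ M₂ E :=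
      maxCommon_mono M₁ M₂ (Finset.erase_subset _ _)
    have hSTv : insert v (S ∪ T) = E := by rw [hST, hE', Finset.insert_erase hvE]
    by_cases hv1 : M₁.Indep {v}
    case neg =>
      refine ⟨insert v S, T, by rw [Finset.insert_union, hSTv], ?_⟩
      rw [M₁.rank_insert_of_dep hv1]
      omega
    by_cases hv2 : M₂.Indep {v}
    case neg =>
      refine ⟨S, insert v T, by rw [Finset.union_insert, hSTv], ?_⟩
      rw [M₂.rank_insert_of_dep hv2]
      omega
    by_cases h1 : M₁.rank (insert v S) + M₂.rank T ≤ maxCommon M₁ M₂ E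
    · exact ⟨insert v S, T, by rw [Finset.insert_union, hSTv], h1⟩
    by_cases h2 : M₁.rank S + M₂.rank (insert v T) ≤ maxCommon M₁ M₂ E
    · exact ⟨S, insert v T, by rw [Finset.union_insert, hSTv], h2⟩
    push_neg at h1 h2
    -- contraction step
    set N₁ := M₁.contract v hv1 with hN₁
    set N₂ := M₂.contract v hv2 with hN₂
    have hmaxc : maxCommon N₁ N₂ E' + 1 ≤ maxCommon M₁ M₂ E := by
      have hne : (E'.powerset.filter fun I => N₁.Indep I ∧ N₂.Indep I).Nonempty :=
        ⟨∅, by simp [Finset.mem_filter, N₁.indep_empty, N₂.indep_empty]⟩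
      obtain ⟨J, hJ, hJc⟩ := Finset.exists_mem_eq_sup _ hne Finset.card
      simp only [Finset.mem_filter, Finset.mem_powerset] at hJ
      obtain ⟨hJE', ⟨hvJ1, hJ1⟩, hvJ2, hJ2⟩ := hJ
      have hins : insert v J ⊆ E := by
        refine Finset.insert_subset hvE (hJE'.trans (Finset.erase_subset _ _))
      have := card_le_maxCommon hins hJ1 hJ2
      rw [Finset.card_insert_of_notMem hvJ1] at this
      rw [maxCommon, hJc]
      omega
    obtain ⟨S', T', hST', hrank'⟩ := ih E' hE'ss N₁ N₂
    have hS'E' : S' ⊆ E' := hST' ▸ Finset.subset_union_left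
    have hT'E' : T' ⊆ E' := hST' ▸ Finset.subset_union_right
    have hvS' : v ∉ S' := fun h => (Finset.notMem_erase v E) (hS'E' h)
    have hvT' : v ∉ T' := fun h => (Finset.notMem_erase v E) (hT'E' h)
    have hr1 := M₁.contract_rank hv1 S' hvS'
    have hr2 := M₂.contract_rank hv2 T' hvT'
    rw [← hN₁] at hr1
    rw [← hN₂] at hr2
    have hcontr : M₁.rank (insert v S') + M₂.rank (insert v T') ≤ maxCommon M₁ M₂ E + 1 := by
      omega
    -- submodularity
    have hsub1 : M₁.rank (S ∪ insert v S') + M₁.rank (S ∩ S') ≤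
        M₁.rank S + M₁.rank (insert v S') := by
      have := M₁.rank_submod S (insert v S')
      have hm : M₁.rank (S ∩ S') ≤ M₁.rank (S ∩ insert v S') :=
        M₁.rank_mono (Finset.inter_subset_inter (le_refl _) (Finset.subset_insert _ _))
      omega
    have hsub2 : M₂.rank (T ∪ insert v T') + M₂.rank (T ∩ T') ≤
        M₂.rank T + M₂.rank (insert v T') := by
      have := M₂.rank_submod T (insert v T')
      have hm : M₂.rank (T ∩ T') ≤ M₂.rank (T ∩ insert v T') :=
        M₂.rank_mono (Finset.inter_subset_inter (le_refl _) (Finset.subset_insert _ _))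
      omega
    -- the two candidate covers
    have hcov1 : (S ∪ insert v S') ∪ (T ∩ T') = E := by
      apply Finset.Subset.antisymm
      · apply Finset.union_subset
        · apply Finset.union_subset (hSE'.trans (Finset.erase_subset _ _))
          exact Finset.insert_subset hvE (hS'E'.trans (Finset.erase_subset _ _))
        · exact (Finset.inter_subset_left.trans hTE').trans (Finset.erase_subset _ _)
      · intro x hx
        by_cases hxv : x = v
        · subst hxv
          exact Finset.mem_union_left _ (Finset.mem_union_right _ (Finset.mem_insert_self _ _))
        · have hx' : x ∈ E' := Finset.mem_erase.2 ⟨hxv, hx⟩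
          have hx1 : x ∈ S ∪ T := hST ▸ hx'
          have hx2 : x ∈ S' ∪ T' := hST' ▸ hx'
          rw [Finset.mem_union] at hx1 hx2
          rw [Finset.mem_union, Finset.mem_union, Finset.mem_insert, Finset.mem_inter]
          rcases hx1 with h | h
          · exact Or.inl (Or.inl h)
          · rcases hx2 with h' | h'
            · exact Or.inl (Or.inr (Or.inr h'))
            · exact Or.inr ⟨h, h'⟩
    have hcov2 : (S ∩ S') ∪ (T ∪ insert v T') = E := by
      apply Finset.Subset.antisymm
      · apply Finset.union_subset
        · exact (Finset.inter_subset_left.trans hSE').trans (Finset.erase_subset _ _)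
        · apply Finset.union_subset (hTE'.trans (Finset.erase_subset _ _))
          exact Finset.insert_subset hvE (hT'E'.trans (Finset.erase_subset _ _))
      · intro x hx
        by_cases hxv : x = v
        · subst hxv
          exact Finset.mem_union_right _ (Finset.mem_union_right _ (Finset.mem_insert_self _ _))
        · have hx' : x ∈ E' := Finset.mem_erase.2 ⟨hxv, hx⟩
          have hx1 : x ∈ S ∪ T := hST ▸ hx'
          have hx2 : x ∈ S' ∪ T' := hST' ▸ hx'
          rw [Finset.mem_union] at hx1 hx2
          rw [Finset.mem_union, Finset.mem_union, Finset.mem_insert, Finset.mem_inter]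
          rcases hx1 with h | h
          · rcases hx2 with h' | h'
            · exact Or.inl ⟨h, h'⟩
            · exact Or.inr (Or.inr (Or.inr h'))
          · exact Or.inr (Or.inl h)
    by_cases hc : M₁.rank (S ∪ insert v S') + M₂.rank (T ∩ T') ≤ maxCommon M₁ M₂ E
    · exact ⟨_, _, hcov1, hc⟩
    · refine ⟨_, _, hcov2, ?_⟩
      push_neg at hc
      omega

end FinMatroid

/-- **Edmonds' matroid intersection theorem:** the maximum size of a common independent
set of two matroids `M₁, M₂` on `V` equals the minimum of
`rank₁(S) + rank₂(T)` over all `S, T ⊆ V` with `S ∪ T = V`. -/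
theorem matroid_intersection_minmax (M₁ M₂ : FinMatroid V) :
    ((Finset.univ : Finset V).powerset.filter
        (fun I => M₁.Indep I ∧ M₂.Indep I)).sup Finset.card
      = (((Finset.univ : Finset V).powerset ×ˢ (Finset.univ : Finset V).powerset).filter
          (fun p => p.1 ∪ p.2 = Finset.univ)).inf'
          ⟨(Finset.univ, Finset.univ), by simp⟩
          (fun p => M₁.rank p.1 + M₂.rank p.2) := by
  apply le_antisymm
  · apply Finset.sup_le
    intro I hI
    simp only [Finset.mem_filter, Finset.mem_powerset] at hI
    apply Finset.le_inf'
    intro p hp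
    simp only [Finset.mem_filter, Finset.mem_product, Finset.mem_powerset] at hp
    have hIsub : I ⊆ p.1 ∪ p.2 := hp.2 ▸ Finset.subset_univ I
    have h1 : (I ∩ p.1).card ≤ M₁.rank p.1 :=
      M₁.card_le_rank Finset.inter_subset_right (M₁.indep_subset hI.2.1 Finset.inter_subset_left)
    have h2 : (I ∩ p.2).card ≤ M₂.rank p.2 :=
      M₂.card_le_rank Finset.inter_subset_right (M₂.indep_subset hI.2.2 Finset.inter_subset_left)
    have hIeq : I = (I ∩ p.1) ∪ (I ∩ p.2) := by
      rw [← Finset.inter_union_distrib_left]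
      exact (Finset.inter_eq_left.2 hIsub).symm
    calc I.card = ((I ∩ p.1) ∪ (I ∩ p.2)).card := by rw [← hIeq]
      _ ≤ (I ∩ p.1).card + (I ∩ p.2).card := Finset.card_union_le _ _
      _ ≤ M₁.rank p.1 + M₂.rank p.2 := by omega
  · obtain ⟨S, T, hST, hle⟩ := FinMatroid.key (Finset.univ : Finset V) M₁ M₂
    have hmem : (S, T) ∈ ((Finset.univ : Finset V).powerset ×ˢ (Finset.univ : Finset V).powerset).filter
          (fun p => p.1 ∪ p.2 = Finset.univ) := by
      rw [Finset.mem_filter]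
      exact ⟨Finset.mem_product.2 ⟨Finset.mem_powerset.2 (Finset.subset_univ _),
        Finset.mem_powerset.2 (Finset.subset_univ _)⟩, hST⟩
    exact le_trans (Finset.inf'_le _ hmem) hle
end
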